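/- Suppose g is strictly convex and an equilibrium p̂ exists. Then the pure strategy p̃ obtained from p̂ by replacing every entry p̂_x ∈ (0,1) by 1 is also an equilibrium, and it is equivalent to p̂ in the sense that J_p̃(x) = J_p̂(x) for all x ∈ E. -/

import Mathlib

/-!
Analytic model of the time-inconsistent stopping framework of Christensen & Lindensjö,
"Time-inconsistent stopping, myopic adjustment & equilibrium stability".

A time-homogeneous Markov chain `X` on a finite state space `E` is encoded by its
transition matrix `P` (`P x y = P_x(X_1 = y)`).  A mixed stopping strategy is a vector
`p ∈ [0,1]^E`; the associated stopping time is `τ_p = min {n ≥ 0 : Y_n ≤ p_{X_n}}`,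
where the `Y_n` are i.i.d. uniform randomization devices.  The quantity
`phi P p f x = E_x[f(X_{τ_p})]` (with the convention `f(X_{τ_p}) := lim_n f(X_n)` on
`{τ_p = ∞}`, the limit existing a.s. by absorption) is realized analytically, via
dominated convergence, as the limit in `n` of the finite-horizon values
`phiSeq P p f n x = E_x[f(X_{τ_p ∧ n})]`, which satisfy the one-step recursion given
by the Markov property.  Likewise `step P v x = E_x[v(X_1)]`.
-/

open Filter

variable {E : Type*}

/-- One-step expectation operator: `step P v x = E_x[v(X_1)] = ∑ y, P x y * v y`. -/
noncomputable def step [Fintype E] (P : E → E → ℝ) (v : E → ℝ) (x : E) : ℝ :=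
  ∑ y, P x y * v y

/-- Finite-horizon value `phiSeq P p f n x = E_x[f(X_{τ_p ∧ n})]`. -/
noncomputable def phiSeq [Fintype E] (P : E → E → ℝ) (p f : E → ℝ) : ℕ → E → ℝ
  | 0 => f
  | n + 1 => fun x => p x * f x + (1 - p x) * step P (phiSeq P p f n) x

/-- `phi P p f x = E_x[f(X_{τ_p})]`, with the convention `f(X_{τ_p}) := lim_n f(X_n)`
on `{τ_p = ∞}`; by dominated convergence it is the limit of the finite-horizon values. -/
noncomputable def phi [Fintype E] (P : E → E → ℝ) (p f : E → ℝ) (x : E) : ℝ :=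
  limUnder atTop fun n => phiSeq P p f n x

/-- `P` is a transition matrix (row-stochastic). -/
def IsTransition [Fintype E] (P : E → E → ℝ) : Prop :=
  (∀ x y, 0 ≤ P x y) ∧ ∀ x, ∑ y, P x y = 1

/-- `a` is an absorbing state of the chain. -/
def IsAbsorbingState (P : E → E → ℝ) (a : E) : Prop := P a a = 1

/-- The chain is absorbing: from each starting state, some absorbing state is reached
with positive probability in a finite number of steps. -/
def IsAbsorbingChain [Fintype E] [DecidableEq E] (P : E → E → ℝ) : Prop :=
  ∀ x : E, ∃ (a : E) (n : ℕ), IsAbsorbingState P a ∧ 0 < ((Matrix.of P) ^ n) x a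

/-- A mixed stopping strategy: a vector in `[0,1]^E`. -/
def IsStrategy (p : E → ℝ) : Prop := ∀ x, p x ∈ Set.Icc (0 : ℝ) 1

/-- `Kval P f h g p x q
      = q f(x) + (1-q) E_x[φ_p(X_1)] + g (q h(x) + (1-q) E_x[ψ_p(X_1)])`. -/
noncomputable def Kval [Fintype E] (P : E → E → ℝ) (f h : E → ℝ) (g : ℝ → ℝ)
    (p : E → ℝ) (x : E) (q : ℝ) : ℝ :=
  q * f x + (1 - q) * step P (phi P p f) x
    + g (q * h x + (1 - q) * step P (phi P p h) x)

/-- `Jval P f h g p x = φ_p(x) + g(ψ_p(x)) = E_x[f(X_{τ_p})] + g(E_x[h(X_{τ_p})])`. -/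
noncomputable def Jval [Fintype E] (P : E → E → ℝ) (f h : E → ℝ) (g : ℝ → ℝ)
    (p : E → ℝ) (x : E) : ℝ :=
  phi P p f x + g (phi P p h x)

/-- Subgame perfect Nash equilibrium (condition (EqI)). -/
def IsEquilibrium [Fintype E] (P : E → E → ℝ) (f h : E → ℝ) (g : ℝ → ℝ)
    (p : E → ℝ) : Prop :=
  ∀ x : E, ∀ q ∈ Set.Icc (0 : ℝ) 1, Kval P f h g p x q ≤ Jval P f h g p x


/-! ### Auxiliary development for the proof of Theorem 4.8 -/

open scoped Classical in
/-- `TCc P n x = P_x(X_n not absorbed)`: mass of the `n`-step kernel on non-absorbing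
states. -/
private noncomputable def TCc [Fintype E] [DecidableEq E] (P : E → E → ℝ) (n : ℕ) (x : E) : ℝ :=
  ∑ y, if IsAbsorbingState P y then 0 else ((Matrix.of P) ^ n) x y

section Aux

variable [Fintype E] [DecidableEq E]

open Finset

private lemma Pn_nonneg (P : E → E → ℝ) (hP : IsTransition P) :
    ∀ (n : ℕ) (x y : E), 0 ≤ ((Matrix.of P) ^ n) x y := by
  intro n
  induction n with
  | zero =>
    intro x y
    rw [pow_zero, Matrix.one_apply]
    split <;> norm_num
  | succ n ih =>
    intro x y
    rw [pow_succ, Matrix.mul_apply]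
    exact Finset.sum_nonneg fun z _ => mul_nonneg (ih x z) (hP.1 z y)

private lemma Pn_rowsum (P : E → E → ℝ) (hP : IsTransition P) :
    ∀ (n : ℕ) (x : E), ∑ y, ((Matrix.of P) ^ n) x y = 1 := by
  intro n
  induction n with
  | zero =>
    intro x
    simp [pow_zero, Matrix.one_apply]
  | succ n ih =>
    intro x
    rw [pow_succ]
    simp only [Matrix.mul_apply]
    rw [Finset.sum_comm]
    have : ∀ z, ∑ y, ((Matrix.of P) ^ n) x z * (Matrix.of P) z y
        = ((Matrix.of P) ^ n) x z := by
      intro z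
      rw [← Finset.mul_sum]
      have : ∑ y, (Matrix.of P) z y = 1 := hP.2 z
      rw [this, mul_one]
    rw [Finset.sum_congr rfl fun z _ => this z, ih x]

private lemma abs_row (P : E → E → ℝ) (hP : IsTransition P) {a : E}
    (ha : IsAbsorbingState P a) {y : E} (hy : y ≠ a) : P a y = 0 := by
  have hsum := hP.2 a
  have h1 : P a a + ∑ y ∈ Finset.univ.erase a, P a y = 1 := by
    rw [Finset.add_sum_erase _ _ (Finset.mem_univ a)]; exact hsum
  have h2 : ∑ y ∈ Finset.univ.erase a, P a y = 0 := by
    have := ha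
    unfold IsAbsorbingState at this
    linarith
  have h3 := (Finset.sum_eq_zero_iff_of_nonneg (fun z _ => hP.1 a z)).mp h2
  exact h3 y (Finset.mem_erase.mpr ⟨hy, Finset.mem_univ y⟩)

private lemma Pn_abs (P : E → E → ℝ) (hP : IsTransition P) {a : E}
    (ha : IsAbsorbingState P a) :
    ∀ (n : ℕ) {y : E}, y ≠ a → ((Matrix.of P) ^ n) a y = 0 := by
  intro n
  induction n with
  | zero =>
    intro y hy
    rw [pow_zero]
    exact Matrix.one_apply_ne (fun h => hy h.symm)
  | succ n ih =>
    intro y hy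
    rw [pow_succ', Matrix.mul_apply]
    apply Finset.sum_eq_zero
    intro z _
    by_cases hz : z = a
    · subst hz
      rw [ih hy, mul_zero]
    · have : (Matrix.of P) a z = 0 := abs_row P hP ha hz
      rw [this, zero_mul]

private lemma TCc_nonneg (P : E → E → ℝ) (hP : IsTransition P) (n : ℕ) (x : E) :
    0 ≤ TCc P n x := by
  classical
  apply Finset.sum_nonneg
  intro y _
  split
  · exact le_rfl
  · exact Pn_nonneg P hP n x y

private lemma TCc_le_one (P : E → E → ℝ) (hP : IsTransition P) (n : ℕ) (x : E) :
    TCc P n x ≤ 1 := by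
  classical
  calc TCc P n x ≤ ∑ y, ((Matrix.of P) ^ n) x y := by
        apply Finset.sum_le_sum
        intro y _
        split
        · exact Pn_nonneg P hP n x y
        · exact le_rfl
    _ = 1 := Pn_rowsum P hP n x

private lemma TCc_abs (P : E → E → ℝ) (hP : IsTransition P) {a : E}
    (ha : IsAbsorbingState P a) (n : ℕ) : TCc P n a = 0 := by
  classical
  apply Finset.sum_eq_zero
  intro y _
  split
  · rfl
  · next hy =>
    exact Pn_abs P hP ha n (fun h : y = a => hy (h ▸ ha))

private lemma TCc_add (P : E → E → ℝ) (hP : IsTransition P) (n m : ℕ) (x : E) :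
    TCc P (n + m) x = ∑ z, ((Matrix.of P) ^ n) x z * TCc P m z := by
  classical
  unfold TCc
  rw [pow_add]
  simp only [Matrix.mul_apply]
  have h1 : ∀ y : E, (if IsAbsorbingState P y then 0
        else ∑ z, ((Matrix.of P) ^ n) x z * ((Matrix.of P) ^ m) z y)
      = ∑ z, (if IsAbsorbingState P y then 0
        else ((Matrix.of P) ^ n) x z * ((Matrix.of P) ^ m) z y) := by
    intro y
    split
    · simp
    · rfl
  rw [Finset.sum_congr rfl fun y _ => h1 y, Finset.sum_comm]
  apply Finset.sum_congr rfl
  intro z _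
  rw [Finset.mul_sum]
  apply Finset.sum_congr rfl
  intro y _
  split
  · rw [mul_zero]
  · rfl

open scoped Classical in
private lemma TCc_zero (P : E → E → ℝ) (x : E) :
    TCc P 0 x = if IsAbsorbingState P x then 0 else 1 := by
  classical
  unfold TCc
  rw [Finset.sum_eq_single x]
  · rw [pow_zero, Matrix.one_apply_eq]
  · intro y _ hy
    rw [pow_zero, Matrix.one_apply_ne (fun h : x = y => hy h.symm)]
    split <;> rfl
  · intro hx
    exact absurd (Finset.mem_univ x) hx

private lemma TCc_succ_le (P : E → E → ℝ) (hP : IsTransition P) (n : ℕ) (x : E) :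
    TCc P (n + 1) x ≤ TCc P n x := by
  classical
  rw [TCc_add P hP n 1 x]
  have h0 : TCc P n x = ∑ z, ((Matrix.of P) ^ n) x z * TCc P 0 z := TCc_add P hP n 0 x
  rw [h0]
  apply Finset.sum_le_sum
  intro z _
  apply mul_le_mul_of_nonneg_left _ (Pn_nonneg P hP n x z)
  rw [TCc_zero P z]
  by_cases hz : IsAbsorbingState P z
  · rw [if_pos hz, TCc_abs P hP hz]
  · rw [if_neg hz]
    exact TCc_le_one P hP 1 z

private lemma TCc_antitone (P : E → E → ℝ) (hP : IsTransition P) (x : E) :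
    Antitone fun n => TCc P n x :=
  antitone_nat_of_succ_le fun n => TCc_succ_le P hP n x

private lemma TCc_tendsto (P : E → E → ℝ) (hP : IsTransition P)
    (habs : IsAbsorbingChain P) [Nonempty E] (x : E) :
    Tendsto (fun n => TCc P n x) atTop (nhds 0) := by
  classical
  choose aof nof h1 h2 using habs
  set N : ℕ := (Finset.univ.sup nof) + 1 with hN
  have hcN : ∀ z, TCc P N z < 1 := by
    intro z
    have hle : TCc P N z ≤ TCc P (nof z) z :=
      TCc_antitone P hP z (le_trans (Finset.le_sup (Finset.mem_univ z)) (Nat.le_succ _))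
    have hbound : TCc P (nof z) z
        ≤ 1 - ((Matrix.of P) ^ (nof z)) z (aof z) := by
      have hrow := Pn_rowsum P hP (nof z) z
      have hsplit : ((Matrix.of P) ^ (nof z)) z (aof z)
          + ∑ y ∈ Finset.univ.erase (aof z), ((Matrix.of P) ^ (nof z)) z y = 1 := by
        rw [Finset.add_sum_erase _ _ (Finset.mem_univ (aof z))]; exact hrow
      have hsub : TCc P (nof z) z
          ≤ ∑ y ∈ Finset.univ.erase (aof z), ((Matrix.of P) ^ (nof z)) z y := by
        unfold TCc
        rw [← Finset.sum_erase_add _ _ (Finset.mem_univ (aof z))]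
        have : (if IsAbsorbingState P (aof z) then 0
            else ((Matrix.of P) ^ (nof z)) z (aof z)) = 0 := if_pos (h1 z)
        rw [this, add_zero]
        apply Finset.sum_le_sum
        intro y _
        split
        · exact Pn_nonneg P hP _ z y
        · exact le_rfl
      linarith
    linarith [h2 z]
  set s : ℝ := Finset.univ.sup' Finset.univ_nonempty (TCc P N) with hs
  have hsle : ∀ z : E, TCc P N z ≤ s := fun z => Finset.le_sup' (TCc P N) (Finset.mem_univ z)
  have hs1 : s < 1 := (Finset.sup'_lt_iff _).mpr fun z _ => hcN z
  have hs0 : 0 ≤ s :=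
    le_trans (TCc_nonneg P hP N (Classical.arbitrary E)) (hsle _)
  have hsk : ∀ (k : ℕ) (z : E), TCc P (k * N) z ≤ s ^ k := by
    intro k
    induction k with
    | zero =>
      intro z
      simpa using TCc_le_one P hP 0 z
    | succ k ih =>
      intro z
      have hidx : (k + 1) * N = N + k * N := by ring
      rw [hidx, TCc_add P hP N (k * N) z]
      have hterm : ∀ w : E, ((Matrix.of P) ^ N) z w * TCc P (k * N) w
          ≤ (if IsAbsorbingState P w then 0 else ((Matrix.of P) ^ N) z w) * s ^ k := by
        intro w
        by_cases hw : IsAbsorbingState P w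
        · rw [if_pos hw, TCc_abs P hP hw, mul_zero, zero_mul]
        · rw [if_neg hw]
          exact mul_le_mul_of_nonneg_left (ih w) (Pn_nonneg P hP N z w)
      calc ∑ w, ((Matrix.of P) ^ N) z w * TCc P (k * N) w
          ≤ ∑ w, (if IsAbsorbingState P w then 0 else ((Matrix.of P) ^ N) z w) * s ^ k :=
            Finset.sum_le_sum fun w _ => hterm w
        _ = TCc P N z * s ^ k := by rw [← Finset.sum_mul]; rfl
        _ ≤ s * s ^ k := mul_le_mul_of_nonneg_right (hsle z) (pow_nonneg hs0 k)
        _ = s ^ (k + 1) := by rw [pow_succ]; ring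
  rw [Metric.tendsto_atTop]
  intro ε hε
  obtain ⟨k, hk⟩ := ((tendsto_pow_atTop_nhds_zero_of_lt_one hs0 hs1).eventually
    (gt_mem_nhds hε)).exists
  refine ⟨k * N, fun n hn => ?_⟩
  have hle : TCc P n x ≤ s ^ k := le_trans (TCc_antitone P hP x hn) (hsk k x)
  rw [Real.dist_eq, sub_zero, abs_of_nonneg (TCc_nonneg P hP n x)]
  exact lt_of_le_of_lt hle hk

private lemma phiSeq_succ_eq (P : E → E → ℝ) (p f : E → ℝ) (n : ℕ) (x : E) :
    phiSeq P p f (n + 1) x = p x * f x + (1 - p x) * step P (phiSeq P p f n) x := rfl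

private lemma step_abs (P : E → E → ℝ) (hP : IsTransition P) {a : E}
    (ha : IsAbsorbingState P a) (v : E → ℝ) : step P v a = v a := by
  unfold step
  rw [Finset.sum_eq_single a]
  · rw [ha, one_mul]
  · intro y _ hy
    rw [abs_row P hP ha hy, zero_mul]
  · intro hx
    exact absurd (Finset.mem_univ a) hx

private lemma phiSeq_abs (P : E → E → ℝ) (hP : IsTransition P) (p f : E → ℝ) {a : E}
    (ha : IsAbsorbingState P a) : ∀ n, phiSeq P p f n a = f a := by
  intro n
  induction n with
  | zero => rfl
  | succ n ih =>
    rw [phiSeq_succ_eq, step_abs P hP ha, ih]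
    ring

private lemma phiSeq_bdd (P : E → E → ℝ) (hP : IsTransition P) (p : E → ℝ)
    (hp : IsStrategy p) (f : E → ℝ) : ∀ (n : ℕ) (x : E),
    |phiSeq P p f n x| ≤ ∑ y, |f y| := by
  intro n
  induction n with
  | zero =>
    intro x
    exact Finset.single_le_sum (fun y _ => abs_nonneg (f y)) (Finset.mem_univ x)
  | succ n ih =>
    intro x
    have hfx : |f x| ≤ ∑ y, |f y| :=
      Finset.single_le_sum (fun y _ => abs_nonneg (f y)) (Finset.mem_univ x)
    have hstep : |step P (phiSeq P p f n) x| ≤ ∑ y, |f y| := by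
      unfold step
      calc |∑ y, P x y * phiSeq P p f n y| ≤ ∑ y, |P x y * phiSeq P p f n y| :=
            Finset.abs_sum_le_sum_abs _ _
        _ ≤ ∑ y, P x y * (∑ z, |f z|) := by
            apply Finset.sum_le_sum
            intro y _
            rw [abs_mul, abs_of_nonneg (hP.1 x y)]
            exact mul_le_mul_of_nonneg_left (ih y) (hP.1 x y)
        _ = ∑ z, |f z| := by rw [← Finset.sum_mul, hP.2 x, one_mul]
    have h0 := (hp x).1
    have h1 := (hp x).2
    rw [phiSeq_succ_eq]
    calc |p x * f x + (1 - p x) * step P (phiSeq P p f n) x|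
        ≤ |p x * f x| + |(1 - p x) * step P (phiSeq P p f n) x| := abs_add_le _ _
      _ = p x * |f x| + (1 - p x) * |step P (phiSeq P p f n) x| := by
          rw [abs_mul, abs_mul, abs_of_nonneg h0, abs_of_nonneg (by linarith : (0:ℝ) ≤ 1 - p x)]
      _ ≤ p x * (∑ y, |f y|) + (1 - p x) * (∑ y, |f y|) := by
          have := mul_le_mul_of_nonneg_left hfx h0
          have := mul_le_mul_of_nonneg_left hstep (by linarith : (0:ℝ) ≤ 1 - p x)
          linarith
      _ = ∑ y, |f y| := by ring

private lemma phiSeq_diff (P : E → E → ℝ) (hP : IsTransition P) (p : E → ℝ)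
    (hp : IsStrategy p) (f : E → ℝ) (M : ℝ) (hM : 0 ≤ M) (hMf : ∀ x, |f x| ≤ M)
    (w : ℕ → E → ℝ) (hw0a : ∀ a, IsAbsorbingState P a → w 0 a = f a)
    (hw0b : ∀ x, |w 0 x| ≤ M)
    (hwrec : ∀ n x, w (n + 1) x = p x * f x + (1 - p x) * step P (w n) x) :
    ∀ (n : ℕ) (x : E), |w n x - phiSeq P p f n x| ≤ 2 * M * TCc P n x := by
  intro n
  induction n with
  | zero =>
    intro x
    by_cases hx : IsAbsorbingState P x
    · rw [hw0a x hx]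
      show |f x - f x| ≤ _
      rw [sub_self, abs_zero]
      exact mul_nonneg (by linarith) (TCc_nonneg P hP 0 x)
    · rw [TCc_zero P x, if_neg hx, mul_one]
      calc |w 0 x - phiSeq P p f 0 x| ≤ |w 0 x| + |phiSeq P p f 0 x| := abs_sub _ _
        _ ≤ M + M := add_le_add (hw0b x) (hMf x)
        _ = 2 * M := by ring
  | succ n ih =>
    intro x
    have hkey : w (n + 1) x - phiSeq P p f (n + 1) x
        = (1 - p x) * ∑ y, P x y * (w n y - phiSeq P p f n y) := by
      have hsum : ∑ y, P x y * (w n y - phiSeq P p f n y)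
          = step P (w n) x - step P (phiSeq P p f n) x := by
        unfold step
        rw [← Finset.sum_sub_distrib]
        apply Finset.sum_congr rfl
        intro y _
        ring
      rw [hwrec n x, phiSeq_succ_eq, hsum]
      ring
    have h0 := (hp x).1
    have h1 := (hp x).2
    have hbnd : |∑ y, P x y * (w n y - phiSeq P p f n y)|
        ≤ ∑ y, P x y * (2 * M * TCc P n y) := by
      calc |∑ y, P x y * (w n y - phiSeq P p f n y)|
          ≤ ∑ y, |P x y * (w n y - phiSeq P p f n y)| := Finset.abs_sum_le_sum_abs _ _
        _ ≤ ∑ y, P x y * (2 * M * TCc P n y) := by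
            apply Finset.sum_le_sum
            intro y _
            rw [abs_mul, abs_of_nonneg (hP.1 x y)]
            exact mul_le_mul_of_nonneg_left (ih y) (hP.1 x y)
    have hsum_eq : ∑ y, P x y * (2 * M * TCc P n y) = 2 * M * TCc P (n + 1) x := by
      rw [show n + 1 = 1 + n from Nat.add_comm n 1, TCc_add P hP 1 n x, Finset.mul_sum]
      apply Finset.sum_congr rfl
      intro z _
      rw [pow_one, Matrix.of_apply]
      ring
    have hmass : (0:ℝ) ≤ ∑ y, P x y * (2 * M * TCc P n y) :=
      Finset.sum_nonneg fun y _ => mul_nonneg (hP.1 x y)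
        (mul_nonneg (by linarith) (TCc_nonneg P hP n y))
    rw [hkey, abs_mul, abs_of_nonneg (by linarith : (0:ℝ) ≤ 1 - p x)]
    calc (1 - p x) * |∑ y, P x y * (w n y - phiSeq P p f n y)|
        ≤ 1 * (∑ y, P x y * (2 * M * TCc P n y)) := by
          apply mul_le_mul (by linarith) hbnd (abs_nonneg _) zero_le_one
      _ = 2 * M * TCc P (n + 1) x := by rw [one_mul, hsum_eq]

private lemma phi_tendsto (P : E → E → ℝ) (hP : IsTransition P)
    (habs : IsAbsorbingChain P) [Nonempty E] (p : E → ℝ) (hp : IsStrategy p)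
    (f : E → ℝ) (x : E) :
    Tendsto (fun n => phiSeq P p f n x) atTop (nhds (phi P p f x)) := by
  classical
  set M : ℝ := ∑ y, |f y| with hM
  have hM0 : 0 ≤ M := Finset.sum_nonneg fun y _ => abs_nonneg _
  have hMf : ∀ z, |f z| ≤ M := fun z =>
    Finset.single_le_sum (fun y _ => abs_nonneg (f y)) (Finset.mem_univ z)
  have hdiff : ∀ (j n : ℕ) (z : E),
      |phiSeq P p f (n + j) z - phiSeq P p f n z| ≤ 2 * M * TCc P n z := by
    intro j
    refine phiSeq_diff P hP p hp f M hM0 hMf (fun n z => phiSeq P p f (n + j) z) ?_ ?_ ?_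
    · intro a ha
      show phiSeq P p f (0 + j) a = f a
      rw [Nat.zero_add]
      exact phiSeq_abs P hP p f ha j
    · intro z
      exact phiSeq_bdd P hP p hp f _ z
    · intro n z
      show phiSeq P p f (n + 1 + j) z = _
      rw [Nat.add_right_comm n 1 j]
      rfl
  have hcauchy : CauchySeq (fun n => phiSeq P p f n x) := by
    apply cauchySeq_of_le_tendsto_0 (fun N => 4 * M * TCc P N x)
    · intro n m N hn hm
      have hb : ∀ k, N ≤ k →
          dist (phiSeq P p f k x) (phiSeq P p f N x) ≤ 2 * M * TCc P N x := by
        intro k hk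
        obtain ⟨j, rfl⟩ := Nat.exists_eq_add_of_le hk
        rw [Real.dist_eq]
        exact hdiff j N x
      calc dist (phiSeq P p f n x) (phiSeq P p f m x)
          ≤ dist (phiSeq P p f n x) (phiSeq P p f N x)
            + dist (phiSeq P p f N x) (phiSeq P p f m x) := dist_triangle _ _ _
        _ ≤ 2 * M * TCc P N x + 2 * M * TCc P N x := by
            have h2 := hb m hm
            rw [dist_comm (phiSeq P p f N x) (phiSeq P p f m x)]
            exact add_le_add (hb n hn) h2
        _ = 4 * M * TCc P N x := by ring
    · have := (TCc_tendsto P hP habs x).const_mul (4 * M)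
      simpa using this
  obtain ⟨l, hl⟩ := cauchySeq_tendsto_of_complete hcauchy
  have : phi P p f x = l := hl.limUnder_eq
  rw [this]
  exact hl

private lemma phi_fix (P : E → E → ℝ) (hP : IsTransition P)
    (habs : IsAbsorbingChain P) [Nonempty E] (p : E → ℝ) (hp : IsStrategy p)
    (f : E → ℝ) (x : E) :
    phi P p f x = p x * f x + (1 - p x) * step P (phi P p f) x := by
  have h1 : Tendsto (fun n => phiSeq P p f (n + 1) x) atTop (nhds (phi P p f x)) :=
    (phi_tendsto P hP habs p hp f x).comp (tendsto_add_atTop_nat 1)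
  have h2 : Tendsto (fun n => p x * f x + (1 - p x) * step P (phiSeq P p f n) x) atTop
      (nhds (p x * f x + (1 - p x) * step P (phi P p f) x)) := by
    apply Tendsto.add tendsto_const_nhds
    apply Tendsto.const_mul
    unfold step
    exact tendsto_finset_sum _ fun y _ =>
      (phi_tendsto P hP habs p hp f y).const_mul (P x y)
  have h1' : Tendsto (fun n => p x * f x + (1 - p x) * step P (phiSeq P p f n) x) atTop
      (nhds (phi P p f x)) := h1
  exact tendsto_nhds_unique h1' h2

private lemma phi_abs (P : E → E → ℝ) (hP : IsTransition P)
    (habs : IsAbsorbingChain P) [Nonempty E] (p : E → ℝ) (hp : IsStrategy p)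
    (f : E → ℝ) {a : E} (ha : IsAbsorbingState P a) : phi P p f a = f a := by
  have h1 := phi_tendsto P hP habs p hp f a
  have h2 : Tendsto (fun n => phiSeq P p f n a) atTop (nhds (f a)) := by
    have : (fun n => phiSeq P p f n a) = fun _ => f a := by
      funext n
      exact phiSeq_abs P hP p f ha n
    rw [this]
    exact tendsto_const_nhds
  exact tendsto_nhds_unique h1 h2

private lemma phi_unique (P : E → E → ℝ) (hP : IsTransition P)
    (habs : IsAbsorbingChain P) [Nonempty E] (p : E → ℝ) (hp : IsStrategy p)
    (f : E → ℝ) (v : E → ℝ)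
    (hv1 : ∀ a, IsAbsorbingState P a → v a = f a)
    (hv2 : ∀ x, v x = p x * f x + (1 - p x) * step P v x) :
    phi P p f = v := by
  classical
  funext x
  set M : ℝ := (∑ y, |f y|) + (∑ y, |v y|) with hM
  have hMf0 : (0:ℝ) ≤ ∑ y, |f y| := Finset.sum_nonneg fun y _ => abs_nonneg _
  have hMv0 : (0:ℝ) ≤ ∑ y, |v y| := Finset.sum_nonneg fun y _ => abs_nonneg _
  have hM0 : 0 ≤ M := by rw [hM]; linarith
  have hMf : ∀ z, |f z| ≤ M := fun z => by
    have := Finset.single_le_sum (fun y (_ : y ∈ Finset.univ) => abs_nonneg (f y))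
      (Finset.mem_univ z)
    rw [hM]; linarith
  have hMv : ∀ z, |v z| ≤ M := fun z => by
    have := Finset.single_le_sum (fun y (_ : y ∈ Finset.univ) => abs_nonneg (v y))
      (Finset.mem_univ z)
    rw [hM]; linarith
  have key := phiSeq_diff P hP p hp f M hM0 hMf (fun _ => v) (fun a ha => hv1 a ha)
    hMv (fun n z => hv2 z)
  have hvten : Tendsto (fun n => phiSeq P p f n x) atTop (nhds (v x)) := by
    rw [tendsto_iff_dist_tendsto_zero]
    refine squeeze_zero (g := fun n => 2 * M * TCc P n x) (fun n => dist_nonneg)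
      (fun n => ?_) ?_
    · rw [Real.dist_eq, abs_sub_comm]
      exact key n x
    · simpa using (TCc_tendsto P hP habs x).const_mul (2 * M)
  exact tendsto_nhds_unique (phi_tendsto P hP habs p hp f x) hvten

end Aux

/-- Theorem 4.8: if `g` is strictly convex and `p̂` is an equilibrium, then the pure
strategy `p̃` obtained from `p̂` by changing every entry in `(0,1)` to `1` is an
equivalent equilibrium (same equilibrium value function). -/
theorem pure_equilibrium_of_strictly_convex [Fintype E] [DecidableEq E]
    (P : E → E → ℝ) (hP : IsTransition P) (habs : IsAbsorbingChain P)
    (f h : E → ℝ) (g : ℝ → ℝ) (hg : Continuous g) (hgc : StrictConvexOn ℝ Set.univ g)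
    (phat : E → ℝ) (hphat : IsStrategy phat) (heq : IsEquilibrium P f h g phat)
    (ptilde : E → ℝ)
    (hpt1 : ∀ x : E, 0 < phat x → phat x < 1 → ptilde x = 1)
    (hpt2 : ∀ x : E, phat x = 0 ∨ phat x = 1 → ptilde x = phat x) :
    IsEquilibrium P f h g ptilde ∧ (∀ x : E, ptilde x = 0 ∨ ptilde x = 1) ∧
      ∀ x : E, Jval P f h g ptilde x = Jval P f h g phat x := by
  classical
  have hpure : ∀ x : E, ptilde x = 0 ∨ ptilde x = 1 := by
    intro x
    rcases ((hphat x).1.eq_or_lt.imp Eq.symm id) with h0 | h0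
    · left
      rw [hpt2 x (Or.inl h0)]
      exact h0
    · rcases (hphat x).2.eq_or_lt with h1 | h1
      · right
        rw [hpt2 x (Or.inr h1), h1]
      · exact Or.inr (hpt1 x h0 h1)
  have hptS : IsStrategy ptilde := by
    intro x
    rcases hpure x with hx | hx <;> rw [hx] <;> constructor <;> norm_num
  cases isEmpty_or_nonempty E with
  | inl hE =>
    refine ⟨fun x => (IsEmpty.false x).elim, hpure, fun x => (IsEmpty.false x).elim⟩
  | inr hne =>
    have hfixf : ∀ x, phi P phat f x
        = phat x * f x + (1 - phat x) * step P (phi P phat f) x :=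
      phi_fix P hP habs phat hphat f
    have hfixh : ∀ x, phi P phat h x
        = phat x * h x + (1 - phat x) * step P (phi P phat h) x :=
      phi_fix P hP habs phat hphat h
    have hkey : ∀ x, 0 < phat x → phat x < 1 →
        phi P phat h x = h x ∧ phi P phat f x = f x := by
      intro x ht0 ht1
      set t := phat x with hts
      set F := f x with hFs
      set H := h x with hHs
      set A := step P (phi P phat f) x with hAs
      set B := step P (phi P phat h) x with hBs
      have hJ : Jval P f h g phat x = t * F + (1 - t) * A + g (t * H + (1 - t) * B) := by
        unfold Jval
        rw [hfixf x, hfixh x]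
      have hK1 : F + g H ≤ t * F + (1 - t) * A + g (t * H + (1 - t) * B) := by
        have hk := heq x 1 ⟨zero_le_one, le_refl 1⟩
        unfold Kval at hk
        rw [hJ] at hk
        calc F + g H = 1 * F + (1 - 1) * A + g (1 * H + (1 - 1) * B) := by norm_num
          _ ≤ _ := hk
      have hK0 : A + g B ≤ t * F + (1 - t) * A + g (t * H + (1 - t) * B) := by
        have hk := heq x 0 ⟨le_refl 0, zero_le_one⟩
        unfold Kval at hk
        rw [hJ] at hk
        calc A + g B = 0 * F + (1 - 0) * A + g (0 * H + (1 - 0) * B) := by norm_num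
          _ ≤ _ := hk
      have hHB : H = B := by
        by_contra hne'
        have hcx := hgc.2 (Set.mem_univ H) (Set.mem_univ B) hne' ht0
          (by linarith : (0:ℝ) < 1 - t) (by ring)
        rw [smul_eq_mul, smul_eq_mul, smul_eq_mul, smul_eq_mul] at hcx
        have e1 : t * (F + g H) ≤ t * (t * F + (1 - t) * A + g (t * H + (1 - t) * B)) :=
          mul_le_mul_of_nonneg_left hK1 ht0.le
        have e2 : (1 - t) * (A + g B)
            ≤ (1 - t) * (t * F + (1 - t) * A + g (t * H + (1 - t) * B)) :=
          mul_le_mul_of_nonneg_left hK0 (by linarith)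
        nlinarith [e1, e2, hcx]
      have hargs : t * H + (1 - t) * B = H := by rw [← hHB]; ring
      have hφh : phi P phat h x = H := by
        rw [hfixh x, ← hBs, ← hHB, ← hts, ← hHs]
        ring
      have hFA : F = A := by
        rw [hargs] at hK1 hK0
        rw [← hHB] at hK0
        have hle1 : F ≤ A := by
          have hmul : (1 - t) * F ≤ (1 - t) * A := by linarith
          exact le_of_mul_le_mul_left hmul (by linarith)
        have hle2 : A ≤ F := by
          have hmul : t * A ≤ t * F := by linarith
          exact le_of_mul_le_mul_left hmul ht0
        linarith
      have hφf : phi P phat f x = F := by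
        rw [hfixf x, ← hAs, ← hFA, ← hts, ← hFs]
        ring
      exact ⟨hφh, hφf⟩
    have hrecf : ∀ x, phi P phat f x
        = ptilde x * f x + (1 - ptilde x) * step P (phi P phat f) x := by
      intro x
      rcases ((hphat x).1.eq_or_lt.imp Eq.symm id) with h0 | h0
      · rw [hpt2 x (Or.inl h0)]
        exact hfixf x
      · rcases (hphat x).2.eq_or_lt with h1 | h1
        · rw [hpt2 x (Or.inr h1)]
          exact hfixf x
        · rw [hpt1 x h0 h1, (hkey x h0 h1).2]
          ring
    have hrech : ∀ x, phi P phat h x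
        = ptilde x * h x + (1 - ptilde x) * step P (phi P phat h) x := by
      intro x
      rcases ((hphat x).1.eq_or_lt.imp Eq.symm id) with h0 | h0
      · rw [hpt2 x (Or.inl h0)]
        exact hfixh x
      · rcases (hphat x).2.eq_or_lt with h1 | h1
        · rw [hpt2 x (Or.inr h1)]
          exact hfixh x
        · rw [hpt1 x h0 h1, (hkey x h0 h1).1]
          ring
    have hFf : phi P ptilde f = phi P phat f :=
      phi_unique P hP habs ptilde hptS f (phi P phat f)
        (fun a ha => phi_abs P hP habs phat hphat f ha) hrecf
    have hHh : phi P ptilde h = phi P phat h :=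
      phi_unique P hP habs ptilde hptS h (phi P phat h)
        (fun a ha => phi_abs P hP habs phat hphat h ha) hrech
    have hJeq : ∀ x, Jval P f h g ptilde x = Jval P f h g phat x := by
      intro x
      unfold Jval
      rw [hFf, hHh]
    refine ⟨?_, hpure, hJeq⟩
    intro x q hq
    have hKeq : Kval P f h g ptilde x q = Kval P f h g phat x q := by
      unfold Kval
      rw [hFf, hHh]
    rw [hKeq, hJeq x]
    exact heq x q hq
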